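/- For every s ≥ 0 and every γ with 0 ≤ γ ≤ 1, (γ e^{s} + e^{−γ s}) / (1 + γ) ≤ cosh(s), and cosh(s) ≤ e^{s²/2}. -/
import Mathlib

open Real

/-- Appendix A.1 of the paper: for `0 ≤ γ ≤ 1` the refined Bennett estimator
`(γ e^s + e^{-γs})/(1+γ)` is dominated by Pinter's estimator `cosh s`, which is in turn
dominated by Hoeffding's estimator `e^{s²/2}`. -/
theorem refined_bennett_le_pinter_le_hoeffding
    (s γ : ℝ) (hs : 0 ≤ s) (hγ0 : 0 ≤ γ) (hγ1 : γ ≤ 1) :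
    (γ * Real.exp s + Real.exp (-(γ * s))) / (1 + γ) ≤ Real.cosh s ∧
      Real.cosh s ≤ Real.exp (s ^ 2 / 2) := by
  refine ⟨?_, Real.cosh_le_exp_half_sq s⟩
  have hconv := convexOn_exp.2 (Set.mem_univ (-s)) (Set.mem_univ 0) hγ0
    (by linarith : (0:ℝ) ≤ 1 - γ) (by ring)
  simp only [smul_eq_mul, mul_zero, add_zero, Real.exp_zero, mul_one] at hconv
  have h1 : Real.exp (-(γ * s)) ≤ γ * Real.exp (-s) + (1 - γ) := by
    rw [show -(γ * s) = γ * (-s) by ring]; exact hconv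
  have hcosh := Real.cosh_eq s
  have h2 : 1 ≤ Real.cosh s := Real.one_le_cosh s
  rw [div_le_iff₀ (by linarith : (0:ℝ) < 1 + γ)]
  nlinarith [Real.exp_pos s, Real.exp_pos (-s)]
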